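/- Let μ^F be the matching produced by the flexible deferred acceptance (FDA) algorithm in a market with regional caps, and for each hospital h define adapted capacity q̃_h = |μ^F_h|. Then the doctor-proposing DA algorithm run with capacities (q̃_h) (ignoring regional caps) produces exactly μ^F. -/

import Mathlib

open Finset

variable {D H : Type*} [Fintype D] [DecidableEq D] [Fintype H] [DecidableEq H]

/-- The hospital doctor `d` proposes to, given the set `A` of (doctor, hospital)
pairs `(d, h)` such that `h` has already rejected `d`.  Doctor preferences are
given by `pref d`, the list of `d`'s acceptable hospitals in order of strict
preference. -/
def propose (pref : D → List H) (A : Finset (D × H)) (d : D) : Option H :=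
  (pref d).find? (fun h => decide ((d, h) ∉ A))

/-- The set of doctors currently applying to hospital `h`. -/
def proposers (pref : D → List H) (A : Finset (D × H)) (h : H) : Finset D :=
  univ.filter (fun d => propose pref A d = some h)

/-- The (up to) `n` best doctors of `S` according to hospital `h`'s strict
priority order (lower `prio h` value means more preferred). -/
def topN (prio : H → D → ℕ) (h : H) (n : ℕ) (S : Finset D) : Finset D :=
  S.filter (fun d => (S.filter (fun d' => prio h d' < prio h d)).card < n)

/-- The doctors tentatively kept by hospital `h`: the best acceptable applicants,
up to the capacity `q h`. -/
def kept (pref : D → List H) (prio : H → D → ℕ) (acc : H → Finset D) (q : H → ℕ)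
    (A : Finset (D × H)) (h : H) : Finset D :=
  topN prio h (q h) (proposers pref A h ∩ acc h)

/-- One round of the doctor-proposing deferred acceptance algorithm, recorded via
the set of rejections so far: every applicant not tentatively kept is rejected. -/
def daStep (pref : D → List H) (prio : H → D → ℕ) (acc : H → Finset D) (q : H → ℕ)
    (A : Finset (D × H)) : Finset (D × H) :=
  A ∪ univ.filter (fun p : D × H =>
    propose pref A p.1 = some p.2 ∧ p.1 ∉ kept pref prio acc q A p.2)

/-- The outcome of the doctor-proposing deferred acceptance algorithm. -/
def daMatch (pref : D → List H) (prio : H → D → ℕ) (acc : H → Finset D) (q : H → ℕ)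
    (d : D) : Option H :=
  propose pref ((daStep pref prio acc q)^[Fintype.card D * Fintype.card H + 1] ∅) d

/-- The set of doctors matched to hospital `h` under matching `μ`. -/
def matchedSet (μ : D → Option H) (h : H) : Finset D :=
  univ.filter (fun d => μ d = some h)

/-- The rank of an outcome in doctor `d`'s preference list (smaller is better;
being unmatched ranks just below the least preferred acceptable hospital). -/
def rankOf (pref : D → List H) (d : D) : Option H → ℕ
  | none => (pref d).length
  | some h => (pref d).idxOf h

/-- Doctor `d` strictly prefers hospital `h` to outcome `o`. -/
def DPrefers (pref : D → List H) (d : D) (h : H) (o : Option H) : Prop :=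
  h ∈ pref d ∧ rankOf pref d (some h) < rankOf pref d o

/-- Individual rationality: nobody is matched with an unacceptable partner. -/
def IndivRat (pref : D → List H) (acc : H → Finset D) (μ : D → Option H) : Prop :=
  ∀ d h, μ d = some h → h ∈ pref d ∧ d ∈ acc h

/-- `(d, h)` is a blocking pair of `μ`. -/
def Blocks (pref : D → List H) (prio : H → D → ℕ) (acc : H → Finset D) (q : H → ℕ)
    (μ : D → Option H) (d : D) (h : H) : Prop :=
  DPrefers pref d h (μ d) ∧
    (((matchedSet μ h).card < q h ∧ d ∈ acc h) ∨
      ∃ d' ∈ matchedSet μ h, prio h d < prio h d')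

/-- Stability: individual rationality, capacities respected, and no blocking pair. -/
def IsStable (pref : D → List H) (prio : H → D → ℕ) (acc : H → Finset D) (q : H → ℕ)
    (μ : D → Option H) : Prop :=
  IndivRat pref acc μ ∧ (∀ h, (matchedSet μ h).card ≤ q h) ∧
    ∀ d h, ¬ Blocks pref prio acc q μ d h

section FDA

variable {R : Type*} [Fintype R] [DecidableEq R]

/-- Number of doctors currently kept in region `r`. -/
def regionCount (region : H → R) (st : H → Finset D) (r : R) : ℕ :=
  ∑ h ∈ univ.filter (fun h => region h = r), (st h).card

/-- The best remaining acceptable applicant(s) of hospital `h` (a singleton when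
`prio h` is injective): doctors of `pool` not yet kept with minimal priority value. -/
def bestRemaining (prio : H → D → ℕ) (h : H) (pool held : Finset D) : Finset D :=
  (pool \ held).filter (fun d => ∀ d' ∈ pool \ held, prio h d ≤ prio h d')

/-- One turn of hospital `h` in the round-robin stage of the FDA algorithm:
if the regional cap and its own physical capacity are not yet binding, `h`
additionally keeps its best remaining applicant. -/
def fdaTurn (pref : D → List H) (prio : H → D → ℕ) (acc : H → Finset D) (q : H → ℕ)
    (region : H → R) (qreg : R → ℕ) (A : Finset (D × H)) (st : H → Finset D)
    (h : H) : H → Finset D :=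
  if regionCount region st (region h) < qreg (region h) ∧ (st h).card < q h then
    Function.update st h
      (st h ∪ bestRemaining prio h (proposers pref A h ∩ acc h) (st h))
  else st

/-- The doctors kept in region `r` given rejections `A`: first each hospital fills
its target capacity with its best acceptable applicants, then hospitals take turns
in the fixed order `ord r` keeping additional doctors until the regional cap or the
physical capacities bind or the applicant pools empty. -/
def regionKept (pref : D → List H) (prio : H → D → ℕ) (acc : H → Finset D) (q : H → ℕ)
    (region : H → R) (qreg : R → ℕ) (tgt : H → ℕ) (ord : R → List H)
    (A : Finset (D × H)) (r : R) : H → Finset D :=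
  (fun st => (ord r).foldl (fdaTurn pref prio acc q region qreg A) st)^[qreg r + Fintype.card D + 1]
    (fun h => topN prio h (tgt h) (proposers pref A h ∩ acc h))

/-- The doctors tentatively kept by hospital `h` in the FDA algorithm. -/
def fdaKept (pref : D → List H) (prio : H → D → ℕ) (acc : H → Finset D) (q : H → ℕ)
    (region : H → R) (qreg : R → ℕ) (tgt : H → ℕ) (ord : R → List H)
    (A : Finset (D × H)) (h : H) : Finset D :=
  regionKept pref prio acc q region qreg tgt ord A (region h) h

/-- One round of the flexible deferred acceptance algorithm, recorded via the set
of rejections so far. -/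
def fdaStep (pref : D → List H) (prio : H → D → ℕ) (acc : H → Finset D) (q : H → ℕ)
    (region : H → R) (qreg : R → ℕ) (tgt : H → ℕ) (ord : R → List H)
    (A : Finset (D × H)) : Finset (D × H) :=
  A ∪ univ.filter (fun p : D × H =>
    propose pref A p.1 = some p.2 ∧
      p.1 ∉ fdaKept pref prio acc q region qreg tgt ord A p.2)

/-- The outcome of the flexible deferred acceptance (FDA) algorithm. -/
def fdaMatch (pref : D → List H) (prio : H → D → ℕ) (acc : H → Finset D) (q : H → ℕ)
    (region : H → R) (qreg : R → ℕ) (tgt : H → ℕ) (ord : R → List H) (d : D) :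
    Option H :=
  propose pref
    ((fdaStep pref prio acc q region qreg tgt ord)^[Fintype.card D * Fintype.card H + 1] ∅) d

end FDA


set_option linter.unusedSectionVars false

section AuxBasic

variable {pref : D → List H} {prio : H → D → ℕ} {A B : Finset (D × H)} {d : D} {h : H}

lemma propose_spec (h1 : propose pref A d = some h) : h ∈ pref d ∧ (d, h) ∉ A := by
  unfold propose at h1
  refine ⟨List.mem_of_find?_eq_some h1, ?_⟩
  have := List.find?_some h1
  simpa using this

private lemma find?_persist (hAB : A ⊆ B) (h2 : (d, h) ∉ B) :
    ∀ l : List H, l.find? (fun x => decide ((d, x) ∉ A)) = some h →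
      l.find? (fun x => decide ((d, x) ∉ B)) = some h := by
  intro l
  induction l with
  | nil => intro h1; simp at h1
  | cons a t ih =>
    intro h1
    by_cases ha : (d, a) ∈ A
    · have e1 := List.find?_cons_of_neg (p := fun x => decide ((d, x) ∉ A)) (a := a) (l := t)
        (by simp [ha])
      have e2 := List.find?_cons_of_neg (p := fun x => decide ((d, x) ∉ B)) (a := a) (l := t)
        (by simp [hAB ha])
      rw [e1] at h1
      rw [e2]
      exact ih h1
    · have e1 := List.find?_cons_of_pos (p := fun x => decide ((d, x) ∉ A)) (a := a) (l := t)
        (by simp [ha])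
      rw [e1] at h1
      have : a = h := by simpa using h1
      subst this
      exact List.find?_cons_of_pos (l := t) (by simp [h2])

lemma propose_persist (hAB : A ⊆ B) (h1 : propose pref A d = some h)
    (h2 : (d, h) ∉ B) : propose pref B d = some h :=
  find?_persist hAB h2 (pref d) h1

lemma mem_proposers {d h} : d ∈ proposers pref A h ↔ propose pref A d = some h := by
  simp [proposers]

section TopN
variable {n : ℕ} {S : Finset D}

lemma topN_subset : topN prio h n S ⊆ S := filter_subset _ _

lemma mem_topN {z : D} :
    z ∈ topN prio h n S ↔ z ∈ S ∧ (S.filter (fun d' => prio h d' < prio h z)).card < n := by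
  simp [topN]

lemma topN_mono_n : topN prio h n S ⊆ topN prio h (n + 1) S := by
  intro z hz
  rw [mem_topN] at hz ⊢
  exact ⟨hz.1, Nat.lt_succ_of_lt hz.2⟩

lemma topN_dc {y z : D} (hy : y ∈ S) (hz : z ∈ topN prio h n S)
    (hlt : prio h y < prio h z) : y ∈ topN prio h n S := by
  rw [mem_topN] at hz ⊢
  refine ⟨hy, lt_of_le_of_lt ?_ hz.2⟩
  apply card_le_card
  intro w hw
  rw [mem_filter] at hw ⊢
  exact ⟨hw.1, hw.2.trans hlt⟩

lemma topN_beats (hinj : Function.Injective (prio h)) {y z : D}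
    (hy : y ∈ S) (hyn : y ∉ topN prio h n S) (hz : z ∈ topN prio h n S) :
    prio h z < prio h y := by
  rcases lt_trichotomy (prio h z) (prio h y) with hlt | heq | hgt
  · exact hlt
  · exact absurd (hinj heq) (fun e => hyn (e ▸ hz))
  · exact absurd (topN_dc hy hz hgt) hyn

lemma topN_card (hinj : Function.Injective (prio h)) (n : ℕ) (S : Finset D) :
    (topN prio h n S).card = min n S.card := by
  induction n with
  | zero => simp [topN]
  | succ n ih =>
    rcases (S \ topN prio h n S).eq_empty_or_nonempty with hemp | hne
    · have hsub : S ⊆ topN prio h n S := by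
        intro x hx
        by_contra hxn
        exact (notMem_empty x) (hemp ▸ (mem_sdiff.2 ⟨hx, hxn⟩))
      have heq : topN prio h n S = S := Subset.antisymm topN_subset hsub
      have hsub' : S ⊆ topN prio h (n + 1) S := by
        intro x hx
        exact topN_mono_n (by rw [heq]; exact hx)
      rw [Subset.antisymm topN_subset hsub']
      have : S.card = min n S.card := by rw [← ih, heq]
      omega
    · obtain ⟨m, hm, hmin⟩ := exists_min_image _ (prio h) hne
      rw [mem_sdiff] at hm
      have hcardlt : (topN prio h n S).card < S.card :=
        card_lt_card (ssubset_iff_of_subset topN_subset |>.2 ⟨m, hm.1, hm.2⟩)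
      have hkey : topN prio h (n + 1) S = insert m (topN prio h n S) := by
        ext z
        constructor
        · intro hz
          rw [mem_insert]
          by_cases hzn : z ∈ topN prio h n S
          · exact Or.inr hzn
          · left
            by_contra hzm
            have hzS : z ∈ S := topN_subset hz
            have hmz : prio h m < prio h z := by
              have := hmin z (mem_sdiff.2 ⟨hzS, hzn⟩)
              rcases lt_or_eq_of_le this with hlt | heq
              · exact hlt
              · exact absurd (hinj heq) (fun e => hzm e.symm)
            have hsub2 : insert m (topN prio h n S) ⊆
                S.filter (fun d' => prio h d' < prio h z) := by
              intro x hx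
              rw [mem_insert] at hx
              rw [mem_filter]
              rcases hx with rfl | hx
              · exact ⟨hm.1, hmz⟩
              · exact ⟨topN_subset hx, topN_beats hinj hzS hzn hx⟩
            have hcard2 : (topN prio h n S).card + 1 ≤
                (S.filter (fun d' => prio h d' < prio h z)).card := by
              have := card_le_card hsub2
              rwa [card_insert_of_notMem hm.2] at this
            rw [mem_topN] at hz
            have := hz.2
            rw [ih] at hcardlt hcard2
            omega
        · intro hz
          rw [mem_insert] at hz
          rcases hz with rfl | hz
          · rw [mem_topN]
            refine ⟨hm.1, ?_⟩
            have hsub3 : S.filter (fun d' => prio h d' < prio h z) ⊆ topN prio h n S := by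
              intro x hx
              rw [mem_filter] at hx
              by_contra hxn
              exact absurd hx.2 (not_lt.2 (hmin x (mem_sdiff.2 ⟨hx.1, hxn⟩)))
            have := card_le_card hsub3
            rw [ih] at this
            omega
          · exact topN_mono_n hz
      rw [hkey, card_insert_of_notMem hm.2, ih]
      rw [ih] at hcardlt
      omega

end TopN

section BestRem
variable {P held : Finset D}

lemma bestRemaining_subset : bestRemaining prio h P held ⊆ P \ held := filter_subset _ _

lemma bestRemaining_of_empty (hemp : P \ held = ∅) : bestRemaining prio h P held = ∅ := by
  unfold bestRemaining
  rw [hemp, filter_empty]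

lemma bestRemaining_spec (hinj : Function.Injective (prio h)) (hne : (P \ held).Nonempty) :
    ∃ m ∈ P \ held, bestRemaining prio h P held = {m} := by
  obtain ⟨m, hm, hmin⟩ := exists_min_image _ (prio h) hne
  refine ⟨m, hm, ?_⟩
  ext x
  simp only [bestRemaining, mem_filter, mem_singleton]
  constructor
  · rintro ⟨hx, hxmin⟩
    exact hinj (le_antisymm (hxmin m hm) (hmin x hx))
  · rintro rfl
    exact ⟨hm, hmin⟩

end BestRem

end AuxBasic


section AuxProcess

variable {R : Type*} [Fintype R] [DecidableEq R]
variable (pref : D → List H) (prio : H → D → ℕ) (acc : H → Finset D) (q : H → ℕ)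
    (region : H → R) (qreg : R → ℕ) (tgt : H → ℕ) (ord : R → List H)

/-- The applicant pool of a hospital. -/
def fdaPool (A : Finset (D × H)) (g : H) : Finset D := proposers pref A g ∩ acc g

/-- The full schedule of round-robin turns in region `r`. -/
def fdaSched (r : R) : List H :=
  (List.replicate (qreg r + Fintype.card D + 1) (ord r)).flatten

/-- Initial state of the region process. -/
def fdaInit (A : Finset (D × H)) : H → Finset D :=
  fun g => topN prio g (tgt g) (proposers pref A g ∩ acc g)

/-- State of the region process after `ℓ` turns. -/
def fdaState (A : Finset (D × H)) (r : R) (ℓ : ℕ) : H → Finset D :=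
  ((fdaSched (D := D) qreg ord r).take ℓ).foldl (fdaTurn pref prio acc q region qreg A)
    (fdaInit pref prio acc tgt A)

local notation "Pool" => fdaPool pref acc
local notation "Sched" => fdaSched (D := D) qreg ord
local notation "Turn" => fdaTurn pref prio acc q region qreg
local notation "σF" => fdaState pref prio acc q region qreg tgt ord
local notation "KeptF" => fdaKept pref prio acc q region qreg tgt ord
local notation "StepF" => fdaStep pref prio acc q region qreg tgt ord

variable {A : Finset (D × H)} {r : R} {g : H} {ℓ : ℕ}

lemma sched_region (hord2 : ∀ h, h ∈ ord r → region h = r) (hg : g ∈ Sched r) :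
    region g = r := by
  rw [fdaSched, List.mem_flatten] at hg
  obtain ⟨l, hl, hgl⟩ := hg
  rw [List.mem_replicate] at hl
  exact hord2 g (hl.2 ▸ hgl)

lemma fdaState_zero : σF A r 0 = fdaInit pref prio acc tgt A := rfl

lemma fdaState_succ (hl : ℓ < (Sched r).length) :
    σF A r (ℓ + 1) = Turn A (σF A r ℓ) ((Sched r)[ℓ]'hl) := by
  unfold fdaState
  rw [List.take_succ, List.getElem?_eq_getElem hl, Option.toList_some, List.foldl_append,
    List.foldl_cons, List.foldl_nil]

lemma fdaState_succ_ge (hl : (Sched r).length ≤ ℓ) : σF A r (ℓ + 1) = σF A r ℓ := by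
  unfold fdaState
  rw [List.take_of_length_le hl, List.take_of_length_le (hl.trans (Nat.le_succ ℓ))]

lemma regionKept_eq_state :
    regionKept pref prio acc q region qreg tgt ord A r = σF A r (Sched r).length := by
  have key : ∀ (k : ℕ) (st : H → Finset D),
      (fun st => (ord r).foldl (fdaTurn pref prio acc q region qreg A) st)^[k] st
        = ((List.replicate k (ord r)).flatten).foldl (fdaTurn pref prio acc q region qreg A) st := by
    intro k
    induction k with
    | zero => intro st; rfl
    | succ k ih =>
      intro st
      rw [Function.iterate_succ_apply, ih, List.replicate_succ, List.flatten_cons,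
        List.foldl_append]
  unfold regionKept fdaState fdaSched
  rw [List.take_length]
  exact key _ _

lemma fdaState_subset : ∀ ℓ g, σF A r ℓ g ⊆ Pool A g := by
  intro ℓ
  induction ℓ with
  | zero => intro g; exact filter_subset _ _
  | succ ℓ ih =>
    intro g
    by_cases hl : ℓ < (Sched r).length
    · rw [fdaState_succ pref prio acc q region qreg tgt ord hl]
      by_cases hgx : g = (Sched r)[ℓ]'hl
      · rw [← hgx]
        unfold fdaTurn
        split
        · rw [Function.update_self]
          apply union_subset (ih g)
          exact (bestRemaining_subset).trans sdiff_subset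
        · exact ih g
      · unfold fdaTurn
        split
        · rw [Function.update_of_ne hgx]
          exact ih g
        · exact ih g
    · rw [fdaState_succ_ge pref prio acc q region qreg tgt ord (le_of_not_gt hl)]
      exact ih g

lemma fdaState_dc : ∀ ℓ g, ∀ z ∈ σF A r ℓ g, ∀ y ∈ Pool A g,
    prio g y < prio g z → y ∈ σF A r ℓ g := by
  intro ℓ
  induction ℓ with
  | zero =>
    intro g z hz y hy hlt
    exact topN_dc hy hz hlt
  | succ ℓ ih =>
    intro g
    by_cases hl : ℓ < (Sched r).length
    · rw [fdaState_succ pref prio acc q region qreg tgt ord hl]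
      by_cases hgx : g = (Sched r)[ℓ]'hl
      · rw [← hgx]
        unfold fdaTurn
        split
        · rw [Function.update_self]
          intro z hz y hy hlt
          rw [mem_union] at hz ⊢
          rcases hz with hz | hz
          · exact Or.inl (ih g z hz y hy hlt)
          · rw [bestRemaining, mem_filter, mem_sdiff] at hz
            by_cases hyst : y ∈ σF A r ℓ g
            · exact Or.inl hyst
            · exact absurd (hz.2 y (mem_sdiff.2 ⟨hy, hyst⟩)) (not_le.2 hlt)
        · exact ih g
      · unfold fdaTurn
        split
        · rw [Function.update_of_ne hgx]
          exact ih g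
        · exact ih g
    · rw [fdaState_succ_ge pref prio acc q region qreg tgt ord (le_of_not_gt hl)]
      exact ih g

lemma fdaState_mono : ∀ ℓ g, σF A r ℓ g ⊆ σF A r (ℓ + 1) g := by
  intro ℓ g
  by_cases hl : ℓ < (Sched r).length
  · rw [fdaState_succ pref prio acc q region qreg tgt ord hl]
    by_cases hgx : g = (Sched r)[ℓ]'hl
    · rw [← hgx]
      unfold fdaTurn
      split
      · rw [Function.update_self]
        exact subset_union_left
      · exact fun _ hz => hz
    · unfold fdaTurn
      split
      · rw [Function.update_of_ne hgx]
      · exact fun _ hz => hz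
  · rw [fdaState_succ_ge pref prio acc q region qreg tgt ord (le_of_not_gt hl)]

lemma fdaState_card (hinj : ∀ h, Function.Injective (prio h))
    (htq : ∀ h, tgt h ≤ q h) :
    ∀ ℓ, (∀ ℓ' < ℓ, regionCount region (σF A r ℓ') r < qreg r) →
    ∀ g, region g = r →
    (σF A r ℓ g).card
      = min (Pool A g).card
          (min (q g) (min (Pool A g).card (tgt g) + (((Sched r).take ℓ).count g))) := by
  intro ℓ
  induction ℓ with
  | zero =>
    intro _ g hg
    have htop : (σF A r 0 g).card = min (tgt g) (Pool A g).card := topN_card (hinj g) _ _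
    rw [htop]
    have := htq g
    simp only [List.take_zero, List.count_nil]
    omega
  | succ ℓ ih =>
    intro hunsat g hg
    by_cases hl : ℓ < (Sched r).length
    · have ihℓ := ih (fun ℓ' hl' => hunsat ℓ' (hl'.trans (Nat.lt_succ_self ℓ))) g hg
      rw [fdaState_succ pref prio acc q region qreg tgt ord hl]
      by_cases hgx : g = (Sched r)[ℓ]'hl
      · have hcount : ((Sched r).take (ℓ + 1)).count g
            = ((Sched r).take ℓ).count g + 1 := by
          rw [List.take_succ, List.getElem?_eq_getElem hl, Option.toList_some,
            List.count_append]
          simp [← hgx]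
        rw [hcount, ← hgx]
        have hc1 : regionCount region (σF A r ℓ) (region g) < qreg (region g) := by
          rw [hg]; exact hunsat ℓ (Nat.lt_succ_self ℓ)
        by_cases hc2 : (σF A r ℓ g).card < q g
        · unfold fdaTurn
          rw [if_pos ⟨hc1, hc2⟩, Function.update_self]
          by_cases hne : ((proposers pref A g ∩ acc g) \ σF A r ℓ g).Nonempty
          · obtain ⟨m, hm, hbest⟩ := bestRemaining_spec (hinj g) hne
            rw [mem_sdiff] at hm
            have hPlt : (σF A r ℓ g).card < (Pool A g).card := by
              apply card_lt_card
              exact (ssubset_iff_of_subset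
                (fdaState_subset pref prio acc q region qreg tgt ord ℓ g)).2 ⟨m, hm.1, hm.2⟩
            rw [hbest, union_comm, ← insert_eq, card_insert_of_notMem hm.2]
            omega
          · rw [not_nonempty_iff_eq_empty] at hne
            have hPsub : Pool A g ⊆ σF A r ℓ g := by
              intro z hz
              by_contra hzn
              exact (notMem_empty z) (hne ▸ (mem_sdiff.2 ⟨hz, hzn⟩))
            have hPeq : σF A r ℓ g = Pool A g :=
              Subset.antisymm (fdaState_subset pref prio acc q region qreg tgt ord ℓ g) hPsub
            rw [bestRemaining_of_empty hne, union_empty]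
            rw [hPeq] at ihℓ ⊢
            omega
        · unfold fdaTurn
          rw [if_neg (fun hc => hc2 hc.2)]
          omega
      · have hcount : ((Sched r).take (ℓ + 1)).count g
            = ((Sched r).take ℓ).count g := by
          rw [List.take_succ, List.getElem?_eq_getElem hl, Option.toList_some,
            List.count_append]
          simp [List.count_singleton, hgx, Ne.symm hgx]
        rw [hcount]
        have hval : Turn A (σF A r ℓ) ((Sched r)[ℓ]'hl) g = σF A r ℓ g := by
          unfold fdaTurn
          split
          · rw [Function.update_of_ne hgx]
          · rfl
        rw [hval]
        exact ihℓ
    · rw [fdaState_succ_ge pref prio acc q region qreg tgt ord (le_of_not_gt hl)]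
      have htake : (Sched r).take (ℓ + 1) = (Sched r).take ℓ := by
        rw [List.take_of_length_le (le_of_not_gt hl),
          List.take_of_length_le ((le_of_not_gt hl).trans (Nat.le_succ ℓ))]
      rw [htake]
      exact ih (fun ℓ' hl' => hunsat ℓ' (hl'.trans (Nat.lt_succ_self ℓ))) g hg

lemma fdaState_freeze (hord2 : ∀ h, h ∈ ord r → region h = r)
    (hsat : qreg r ≤ regionCount region (σF A r ℓ) r) :
    ∀ m, ℓ ≤ m → σF A r m = σF A r ℓ := by
  intro m
  induction m with
  | zero => intro hm; rw [Nat.le_zero.1 hm]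
  | succ m ih =>
    intro hm
    rcases Nat.lt_or_ge ℓ (m + 1) with hlt | hge
    · have hm' : ℓ ≤ m := Nat.lt_succ_iff.1 hlt
      have heq := ih hm'
      by_cases hl : m < (Sched r).length
      · rw [fdaState_succ pref prio acc q region qreg tgt ord hl]
        have hx : region ((Sched r)[m]'hl) = r :=
          sched_region region qreg ord hord2 (List.getElem_mem hl)
        have hturn : Turn A (σF A r m) ((Sched r)[m]'hl) = σF A r m := by
          unfold fdaTurn
          rw [if_neg]
          rintro ⟨hc1, -⟩
          rw [hx, heq] at hc1
          exact absurd hsat (not_le.2 hc1)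
        rw [hturn, heq]
      · rw [fdaState_succ_ge pref prio acc q region qreg tgt ord (le_of_not_gt hl), heq]
    · have heq2 : ℓ = m + 1 := le_antisymm hm hge
      rw [heq2]

/-- The saturation moment of the region process. -/
def fdaSatIdx (A : Finset (D × H)) (r : R) : ℕ :=
  Nat.find (p := fun ℓ => (fdaSched (D := D) qreg ord r).length ≤ ℓ ∨
    qreg r ≤ regionCount region (fdaState pref prio acc q region qreg tgt ord A r ℓ) r)
    ⟨(fdaSched (D := D) qreg ord r).length, Or.inl le_rfl⟩

local notation "SatF" => fdaSatIdx pref prio acc q region qreg tgt ord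

lemma fdaSat_le : SatF A r ≤ (Sched r).length := by
  exact Nat.find_le (Or.inl le_rfl)

lemma fdaSat_min (hm : ℓ < SatF A r) :
    ℓ < (Sched r).length ∧ regionCount region (σF A r ℓ) r < qreg r := by
  have h2 : ¬((Sched r).length ≤ ℓ ∨ qreg r ≤ regionCount region (σF A r ℓ) r) :=
    Nat.find_min (p := fun ℓ => (Sched r).length ≤ ℓ ∨
      qreg r ≤ regionCount region (σF A r ℓ) r) ⟨(Sched r).length, Or.inl le_rfl⟩ hm
  push_neg at h2
  exact h2

lemma fdaSat_spec :
    (Sched r).length ≤ SatF A r ∨ qreg r ≤ regionCount region (σF A r (SatF A r)) r := by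
  exact Nat.find_spec (p := fun ℓ => (Sched r).length ≤ ℓ ∨
    qreg r ≤ regionCount region (σF A r ℓ) r) ⟨(Sched r).length, Or.inl le_rfl⟩

lemma regionKept_eq_sat (hord2 : ∀ h, h ∈ ord r → region h = r) :
    regionKept pref prio acc q region qreg tgt ord A r = σF A r (SatF A r) := by
  rw [regionKept_eq_state]
  rcases fdaSat_spec pref prio acc q region qreg tgt ord (A := A) (r := r) with hle | hsat
  · have : SatF A r = (Sched r).length := le_antisymm (fdaSat_le pref prio acc q region qreg tgt ord) hle
    rw [this]
  · exact fdaState_freeze pref prio acc q region qreg tgt ord hord2 hsat _ (fdaSat_le pref prio acc q region qreg tgt ord)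

/-- The number of pre-saturation turns of hospital `g`. -/
def fdaTau (A : Finset (D × H)) (g : H) : ℕ :=
  ((fdaSched (D := D) qreg ord (region g)).take
    (fdaSatIdx pref prio acc q region qreg tgt ord A (region g))).count g

local notation "TauF" => fdaTau pref prio acc q region qreg tgt ord

lemma fdaKept_eq_state (hord2 : ∀ h, h ∈ ord (region g) → region h = region g) :
    KeptF A g = σF A (region g) (SatF A (region g)) g := by
  unfold fdaKept
  rw [regionKept_eq_sat pref prio acc q region qreg tgt ord hord2]

lemma fdaKept_card (hinj : ∀ h, Function.Injective (prio h))
    (hord2 : ∀ h, h ∈ ord (region g) → region h = region g) (htq : ∀ h, tgt h ≤ q h) :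
    (KeptF A g).card
      = min (Pool A g).card (min (q g) (min (Pool A g).card (tgt g) + TauF A g)) := by
  rw [fdaKept_eq_state pref prio acc q region qreg tgt ord hord2]
  exact fdaState_card pref prio acc q region qreg tgt ord hinj htq _
    (fun ℓ' hl' => (fdaSat_min pref prio acc q region qreg tgt ord hl').2) g rfl

lemma fdaKept_subset_pool (hordR : ∀ (r : R) (h : H), h ∈ ord r → region h = r) :
    KeptF A g ⊆ Pool A g := by
  rw [fdaKept_eq_state pref prio acc q region qreg tgt ord (hordR (region g))]
  exact fdaState_subset pref prio acc q region qreg tgt ord _ g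

lemma fdaKept_dc (hordR : ∀ (r : R) (h : H), h ∈ ord r → region h = r)
    {z y : D} (hz : z ∈ KeptF A g) (hy : y ∈ Pool A g) (hlt : prio g y < prio g z) :
    y ∈ KeptF A g := by
  rw [fdaKept_eq_state pref prio acc q region qreg tgt ord (hordR (region g))] at hz ⊢
  exact fdaState_dc pref prio acc q region qreg tgt ord _ g z hz y hy hlt

lemma fdaKept_beats (hinj : ∀ h, Function.Injective (prio h))
    (hordR : ∀ (r : R) (h : H), h ∈ ord r → region h = r)
    {z y : D} (hy : y ∈ Pool A g) (hyn : y ∉ KeptF A g) (hz : z ∈ KeptF A g) :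
    prio g z < prio g y := by
  rcases lt_trichotomy (prio g z) (prio g y) with h | h | h
  · exact h
  · exact absurd (hinj g h ▸ hz) hyn
  · exact absurd (fdaKept_dc pref prio acc q region qreg tgt ord hordR hz hy h) hyn

lemma mem_fdaStep {p : D × H} :
    p ∈ StepF A ↔ p ∈ A ∨ (propose pref A p.1 = some p.2 ∧ p.1 ∉ KeptF A p.2) := by
  simp [fdaStep]

lemma subset_fdaStep : A ⊆ StepF A := subset_union_left

lemma fdaKept_subset_pool_step (hordR : ∀ (r : R) (h : H), h ∈ ord r → region h = r) :
    KeptF A g ⊆ Pool (StepF A) g := by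
  intro y hy
  have hpool : y ∈ Pool A g :=
    fdaKept_subset_pool pref prio acc q region qreg tgt ord hordR hy
  rw [fdaPool, mem_inter, mem_proposers] at hpool
  have hnotin : (y, g) ∉ StepF A := by
    rw [mem_fdaStep]
    rintro (h1 | ⟨-, h2⟩)
    · exact (propose_spec hpool.1).2 h1
    · exact h2 hy
  exact mem_inter.2 ⟨mem_proposers.2
    (propose_persist (subset_fdaStep pref prio acc q region qreg tgt ord) hpool.1 hnotin),
    hpool.2⟩

lemma fdaTau_mono (hinj : ∀ h, Function.Injective (prio h))
    (hordR : ∀ (r : R) (h : H), h ∈ ord r → region h = r) (htq : ∀ h, tgt h ≤ q h) :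
    TauF (StepF A) g ≤ TauF A g := by
  have hsat : SatF (StepF A) (region g) ≤ SatF A (region g) := by
    by_contra hcon
    push_neg at hcon
    have h1 := fdaSat_min pref prio acc q region qreg tgt ord (A := StepF A) hcon
    have hsatA : qreg (region g) ≤
        regionCount region (σF A (region g) (SatF A (region g))) (region g) := by
      rcases fdaSat_spec pref prio acc q region qreg tgt ord (A := A) (r := region g)
        with hle | hs
      · exact absurd h1.1 (not_lt.2 hle)
      · exact hs
    have hpoint : ∀ h ∈ univ.filter (fun h => region h = region g),
        (σF A (region g) (SatF A (region g)) h).card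
          ≤ (σF (StepF A) (region g) (SatF A (region g)) h).card := by
      intro h hh
      rw [mem_filter] at hh
      have hhr : region h = region g := hh.2
      have hKA : σF A (region g) (SatF A (region g)) h = KeptF A h := by
        rw [fdaKept_eq_state pref prio acc q region qreg tgt ord (hordR (region h)), hhr]
      have hcard' := fdaState_card pref prio acc q region qreg tgt ord
        (A := StepF A) hinj htq (SatF A (region g))
        (fun ℓ' hl' =>
          (fdaSat_min pref prio acc q region qreg tgt ord (hl'.trans hcon)).2) h hhr
      have hcardA := fdaKept_card pref prio acc q region qreg tgt ord
        (A := A) (g := h) hinj (hordR (region h)) htq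
      have htau : TauF A h
          = ((Sched (region g)).take (SatF A (region g))).count h := by
        unfold fdaTau
        rw [hhr]
      rw [htau] at hcardA
      have hsub := fdaKept_subset_pool_step pref prio acc q region qreg tgt ord
        (A := A) (g := h) hordR
      have hPP : (KeptF A h).card ≤ (Pool (StepF A) h).card := card_le_card hsub
      rw [hKA, hcard']
      omega
    have hsum : regionCount region (σF A (region g) (SatF A (region g))) (region g)
        ≤ regionCount region (σF (StepF A) (region g) (SatF A (region g))) (region g) := by
      unfold regionCount
      exact Finset.sum_le_sum hpoint
    exact absurd (hsatA.trans hsum) (not_le.2 h1.2)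
  unfold fdaTau
  have htake : (Sched (region g)).take (SatF (StepF A) (region g))
      = ((Sched (region g)).take (SatF A (region g))).take
          (SatF (StepF A) (region g)) := by
    rw [List.take_take, min_eq_left hsat]
  rw [htake]
  exact (List.take_sublist _ _).count_le g

/-- The key invariant once a hospital has been rationed. -/
def fdaPremise (A : Finset (D × H)) (g : H) : Prop :=
  (fdaKept pref prio acc q region qreg tgt ord A g).card = q g ∨
    tgt g + fdaTau pref prio acc q region qreg tgt ord A g
      ≤ (fdaKept pref prio acc q region qreg tgt ord A g).card

local notation "PremF" => fdaPremise pref prio acc q region qreg tgt ord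

lemma fda_stepD (hinj : ∀ h, Function.Injective (prio h))
    (hordR : ∀ (r : R) (h : H), h ∈ ord r → region h = r) (htq : ∀ h, tgt h ≤ q h)
    (hp : PremF A g) :
    PremF (StepF A) g ∧ (KeptF (StepF A) g).card ≤ (KeptF A g).card := by
  have hA := fdaKept_card pref prio acc q region qreg tgt ord
    (A := A) (g := g) hinj (hordR (region g)) htq
  have hA' := fdaKept_card pref prio acc q region qreg tgt ord
    (A := StepF A) (g := g) hinj (hordR (region g)) htq
  have htau := fdaTau_mono pref prio acc q region qreg tgt ord
    (A := A) (g := g) hinj hordR htq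
  have hPP : (KeptF A g).card ≤ (Pool (StepF A) g).card :=
    card_le_card (fdaKept_subset_pool_step pref prio acc q region qreg tgt ord hordR)
  unfold fdaPremise at hp ⊢
  omega

lemma fdaPremise_of_rationed (hinj : ∀ h, Function.Injective (prio h))
    (hordR : ∀ (r : R) (h : H), h ∈ ord r → region h = r) (htq : ∀ h, tgt h ≤ q h)
    {d : D} (hd : d ∈ Pool A g) (hdn : d ∉ KeptF A g) : PremF A g := by
  have hA := fdaKept_card pref prio acc q region qreg tgt ord
    (A := A) (g := g) hinj (hordR (region g)) htq
  have hlt : (KeptF A g).card < (Pool A g).card :=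
    card_lt_card ((ssubset_iff_of_subset
      (fdaKept_subset_pool pref prio acc q region qreg tgt ord hordR)).2 ⟨d, hd, hdn⟩)
  unfold fdaPremise
  omega

lemma fda_chain (hinj : ∀ h, Function.Injective (prio h))
    (hordR : ∀ (r : R) (h : H), h ∈ ord r → region h = r) (htq : ∀ h, tgt h ≤ q h)
    (hp : PremF A g) :
    ∀ k, (KeptF ((StepF)^[k] A) g).card ≤ (KeptF A g).card ∧ PremF ((StepF)^[k] A) g := by
  intro k
  induction k with
  | zero => exact ⟨le_rfl, hp⟩
  | succ k ih =>
    rw [Function.iterate_succ_apply']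
    have := fda_stepD pref prio acc q region qreg tgt ord
      (A := (StepF)^[k] A) (g := g) hinj hordR htq ih.2
    exact ⟨this.2.trans ih.1, this.1⟩

/-- FDA cutoff invariant: every doctor kept is better than every doctor ever rejected. -/
def fdaOK (A : Finset (D × H)) : Prop :=
  ∀ g y, y ∈ acc g → (y, g) ∈ A →
    (∀ z ∈ fdaKept pref prio acc q region qreg tgt ord A g, prio g z < prio g y) ∧
      fdaPremise pref prio acc q region qreg tgt ord A g

local notation "OKF" => fdaOK pref prio acc q region qreg tgt ord

lemma fdaOK_step (hinj : ∀ h, Function.Injective (prio h))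
    (hordR : ∀ (r : R) (h : H), h ∈ ord r → region h = r) (htq : ∀ h, tgt h ≤ q h)
    (hok : OKF A) : OKF (StepF A) := by
  intro g y hyacc hyA'
  have key : (∀ z ∈ KeptF A g, prio g z < prio g y) ∧ PremF A g := by
    rw [mem_fdaStep] at hyA'
    rcases hyA' with hyA | ⟨hprop, hkept⟩
    · exact hok g y hyacc hyA
    · have hypool : y ∈ Pool A g := mem_inter.2 ⟨mem_proposers.2 hprop, hyacc⟩
      exact ⟨fun z hz => fdaKept_beats pref prio acc q region qreg tgt ord hinj hordR
          hypool hkept hz,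
        fdaPremise_of_rationed pref prio acc q region qreg tgt ord hinj hordR htq
          hypool hkept⟩
  obtain ⟨hbeats, hprem⟩ := key
  have hstep := fda_stepD pref prio acc q region qreg tgt ord hinj hordR htq hprem
  refine ⟨?_, hstep.1⟩
  intro z hz
  by_contra hzy
  push_neg at hzy
  have hyneq : y ≠ z := by
    rintro rfl
    have hzpool := fdaKept_subset_pool pref prio acc q region qreg tgt ord
      (A := StepF A) hordR hz
    rw [fdaPool, mem_inter, mem_proposers] at hzpool
    exact (propose_spec hzpool.1).2 hyA'
  have hzy' : prio g y < prio g z :=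
    lt_of_le_of_ne hzy (fun e => hyneq (hinj g e))
  have hsub : insert z (KeptF A g) ⊆ KeptF (StepF A) g := by
    intro x hx
    rcases mem_insert.1 hx with rfl | hx
    · exact hz
    · exact fdaKept_dc pref prio acc q region qreg tgt ord (A := StepF A) hordR hz
        (fdaKept_subset_pool_step pref prio acc q region qreg tgt ord hordR hx)
        ((hbeats x hx).trans hzy')
  have hznot : z ∉ KeptF A g := fun hzk => absurd (hbeats z hzk) (not_lt.2 hzy)
  have hcard := card_le_card hsub
  rw [card_insert_of_notMem hznot] at hcard
  have := hstep.2
  omega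

lemma fdaOK_iterate (hinj : ∀ h, Function.Injective (prio h))
    (hordR : ∀ (r : R) (h : H), h ∈ ord r → region h = r) (htq : ∀ h, tgt h ≤ q h) :
    ∀ t, OKF ((StepF)^[t] ∅) := by
  intro t
  induction t with
  | zero => intro g y _ hy; exact absurd hy (notMem_empty _)
  | succ t ih =>
    rw [Function.iterate_succ_apply']
    exact fdaOK_step pref prio acc q region qreg tgt ord hinj hordR htq ih

section DASide

variable (qq : H → ℕ) {B : Finset (D × H)}

lemma kept_eq_topN : kept pref prio acc qq B g = topN prio g (qq g) (Pool B g) := rfl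

lemma kept_subset_pool : kept pref prio acc qq B g ⊆ Pool B g := topN_subset

lemma kept_card (hinj : ∀ h, Function.Injective (prio h)) :
    (kept pref prio acc qq B g).card = min (qq g) (Pool B g).card := topN_card (hinj g) _ _

lemma mem_daStep {p : D × H} :
    p ∈ daStep pref prio acc qq B ↔
      p ∈ B ∨ (propose pref B p.1 = some p.2 ∧ p.1 ∉ kept pref prio acc qq B p.2) := by
  simp [daStep]

lemma kept_subset_pool_step :
    kept pref prio acc qq B g ⊆ Pool (daStep pref prio acc qq B) g := by
  intro y hy
  have hpool : y ∈ Pool B g := kept_subset_pool pref prio acc qq hy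
  rw [fdaPool, mem_inter, mem_proposers] at hpool
  have hnotin : (y, g) ∉ daStep pref prio acc qq B := by
    rw [mem_daStep]
    rintro (h1 | ⟨-, h2⟩)
    · exact (propose_spec hpool.1).2 h1
    · exact h2 hy
  exact mem_inter.2 ⟨mem_proposers.2
    (propose_persist subset_union_left hpool.1 hnotin), hpool.2⟩

/-- DA cutoff invariant. -/
def daOK (B : Finset (D × H)) : Prop :=
  ∀ g y, y ∈ acc g → (y, g) ∈ B →
    (∀ z ∈ kept pref prio acc qq B g, prio g z < prio g y) ∧
      qq g ≤ (kept pref prio acc qq B g).card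

lemma daOK_step (hinj : ∀ h, Function.Injective (prio h))
    (hok : daOK pref prio acc qq B) : daOK pref prio acc qq (daStep pref prio acc qq B) := by
  intro g y hyacc hyB'
  have key : (∀ z ∈ kept pref prio acc qq B g, prio g z < prio g y) ∧
      qq g ≤ (kept pref prio acc qq B g).card := by
    rw [mem_daStep] at hyB'
    rcases hyB' with hyB | ⟨hprop, hkept⟩
    · exact hok g y hyacc hyB
    · have hypool : y ∈ Pool B g := mem_inter.2 ⟨mem_proposers.2 hprop, hyacc⟩
      refine ⟨fun z hz => topN_beats (hinj g) hypool hkept hz, ?_⟩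
      have hlt : (kept pref prio acc qq B g).card < (Pool B g).card :=
        card_lt_card ((ssubset_iff_of_subset (kept_subset_pool pref prio acc qq)).2
          ⟨y, hypool, hkept⟩)
      have := kept_card pref prio acc qq (g := g) (B := B) hinj
      omega
  obtain ⟨hbeats, hfull⟩ := key
  constructor
  · intro z hz
    by_contra hzy
    push_neg at hzy
    have hyneq : y ≠ z := by
      rintro rfl
      have hzpool := kept_subset_pool pref prio acc qq
        (B := daStep pref prio acc qq B) hz
      rw [fdaPool, mem_inter, mem_proposers] at hzpool
      exact (propose_spec hzpool.1).2 hyB'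
    have hzy' : prio g y < prio g z :=
      lt_of_le_of_ne hzy (fun e => hyneq (hinj g e))
    have hsub : kept pref prio acc qq B g ⊆
        (Pool (daStep pref prio acc qq B) g).filter (fun d' => prio g d' < prio g z) := by
      intro x hx
      rw [mem_filter]
      exact ⟨kept_subset_pool_step pref prio acc qq hx, (hbeats x hx).trans hzy'⟩
    have hcard := card_le_card hsub
    rw [kept_eq_topN, mem_topN] at hz
    omega
  · have hsub := kept_subset_pool_step pref prio acc qq (B := B) (g := g)
    have hcard := card_le_card hsub
    have h1 := kept_card pref prio acc qq (g := g) (B := B) hinj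
    have h2 := kept_card pref prio acc qq (g := g) (B := daStep pref prio acc qq B) hinj
    omega

lemma daOK_iterate (hinj : ∀ h, Function.Injective (prio h)) :
    ∀ t, daOK pref prio acc qq ((daStep pref prio acc qq)^[t] ∅) := by
  intro t
  induction t with
  | zero => intro g y _ hy; exact absurd hy (notMem_empty _)
  | succ t ih =>
    rw [Function.iterate_succ_apply']
    exact daOK_step pref prio acc qq hinj ih

end DASide

end AuxProcess


lemma step_fixed {f : Finset (D × H) → Finset (D × H)} (hf : ∀ B, B ⊆ f B) :
    f (f^[Fintype.card D * Fintype.card H + 1] ∅) = f^[Fintype.card D * Fintype.card H + 1] ∅ := by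
  set N := Fintype.card D * Fintype.card H with hN
  have hcard : ∀ B : Finset (D × H), B.card ≤ N := by
    intro B
    have h1 := card_le_univ B
    rwa [Fintype.card_prod, ← hN] at h1
  have hex : ∃ k, k ≤ N ∧ f^[k + 1] ∅ = f^[k] ∅ := by
    by_contra hcon
    push_neg at hcon
    have hgrow : ∀ k, k ≤ N + 1 → k ≤ (f^[k] ∅).card := by
      intro k
      induction k with
      | zero => intro _; exact Nat.zero_le _
      | succ k ih =>
        intro hk
        have hk' : k ≤ N := by omega
        have hne := hcon k hk'
        have hne' : f^[k] ∅ ≠ f (f^[k] ∅) := fun e => hne (by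
          rw [Function.iterate_succ_apply', ← e])
        have hss : f^[k] ∅ ⊂ f^[k + 1] ∅ := by
          rw [Function.iterate_succ_apply']
          exact (hf _).ssubset_of_ne hne'
        have h2 := card_lt_card hss
        have h3 := ih (by omega)
        omega
    have h4 := hgrow (N + 1) le_rfl
    have h5 := hcard (f^[N + 1] ∅)
    omega
  obtain ⟨k, hk, hfix⟩ := hex
  have hstab : ∀ m, k ≤ m → f^[m] ∅ = f^[k] ∅ := by
    intro m
    induction m with
    | zero => intro hm; rw [Nat.le_zero.1 hm]
    | succ m ih =>
      intro hm
      rcases Nat.lt_or_ge k (m + 1) with h1 | h2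
      · have heq := ih (Nat.lt_succ_iff.1 h1)
        calc f^[m + 1] ∅ = f (f^[m] ∅) := Function.iterate_succ_apply' f m ∅
        _ = f (f^[k] ∅) := by rw [heq]
        _ = f^[k + 1] ∅ := (Function.iterate_succ_apply' f k ∅).symm
        _ = f^[k] ∅ := hfix
      · have heq2 : k = m + 1 := le_antisymm hm h2
        rw [heq2]
  calc f (f^[N + 1] ∅) = f^[N + 1 + 1] ∅ := (Function.iterate_succ_apply' f (N + 1) ∅).symm
  _ = f^[k] ∅ := hstab (N + 1 + 1) (by omega)
  _ = f^[N + 1] ∅ := (hstab (N + 1) (by omega)).symm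

/-- Theorem 2 of the paper: let `μ^F` be the matching produced by the
FDA algorithm, and define adapted capacities `q̃ h = |μ^F_h|`. Then the
doctor-proposing DA algorithm run with capacities `q̃` (and no regional caps)
produces exactly `μ^F`. -/
theorem fda_eq_da_with_adapted_capacities
    {R : Type*} [Fintype R] [DecidableEq R]
    (pref : D → List H) (prio : H → D → ℕ) (acc : H → Finset D) (q : H → ℕ)
    (region : H → R) (qreg : R → ℕ) (tgt : H → ℕ) (ord : R → List H)
    (hinj : ∀ h, Function.Injective (prio h)) (hnd : ∀ d, (pref d).Nodup)
    (hord : ∀ r, (ord r).Nodup ∧ ∀ h, h ∈ ord r ↔ region h = r)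
    (htgt : ∀ r, ∑ h ∈ univ.filter (fun h => region h = r), tgt h ≤ qreg r)
    (htq : ∀ h, tgt h ≤ q h) :
    ∀ d, daMatch pref prio acc
        (fun h => (matchedSet (fdaMatch pref prio acc q region qreg tgt ord) h).card) d
      = fdaMatch pref prio acc q region qreg tgt ord d := by
  have hordR : ∀ (r : R) (h : H), h ∈ ord r → region h = r :=
    fun r h hh => ((hord r).2 h).1 hh
  intro d
  set NN := Fintype.card D * Fintype.card H + 1 with hNN
  set F := fdaStep pref prio acc q region qreg tgt ord with hF
  set Astar := F^[NN] ∅ with hAstarDef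
  have hsubF : ∀ B : Finset (D × H), B ⊆ F B := fun B => subset_union_left
  have hfixF : F Astar = Astar := step_fixed hsubF
  have hkeptF : ∀ (x : D) (h : H), propose pref Astar x = some h →
      x ∈ fdaKept pref prio acc q region qreg tgt ord Astar h := by
    intro x h hp
    by_contra hx
    have hmem : (x, h) ∈ F Astar := by
      rw [hF, mem_fdaStep pref prio acc q region qreg tgt ord]
      exact Or.inr ⟨hp, hx⟩
    rw [hfixF] at hmem
    exact (propose_spec hp).2 hmem
  have hprop_eq : ∀ h : H, proposers pref Astar h
      = fdaKept pref prio acc q region qreg tgt ord Astar h := by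
    intro h
    apply Subset.antisymm
    · intro x hx
      exact hkeptF x h (mem_proposers.1 hx)
    · intro x hx
      exact (mem_inter.1
        (fdaKept_subset_pool pref prio acc q region qreg tgt ord hordR hx)).1
  have hms : ∀ h : H, matchedSet (fdaMatch pref prio acc q region qreg tgt ord) h
      = proposers pref Astar h := by
    intro h
    ext x
    simp only [matchedSet, proposers, mem_filter, mem_univ, true_and]
    exact ⟨fun hx => hx, fun hx => hx⟩
  set qt := (fun h => (matchedSet (fdaMatch pref prio acc q region qreg tgt ord) h).card)
    with hqt
  have hqt_eq : ∀ h, qt h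
      = (fdaKept pref prio acc q region qreg tgt ord Astar h).card := by
    intro h
    show (matchedSet (fdaMatch pref prio acc q region qreg tgt ord) h).card = _
    rw [hms h, hprop_eq h]
  set G := daStep pref prio acc qt with hG
  set Bstar := G^[NN] ∅ with hBstarDef
  have hsubG : ∀ B : Finset (D × H), B ⊆ G B := fun B => subset_union_left
  have hfixG : G Bstar = Bstar := step_fixed hsubG
  have hkeptG : ∀ (x : D) (h : H), propose pref Bstar x = some h →
      x ∈ kept pref prio acc qt Bstar h := by
    intro x h hp
    by_contra hx
    have hmem : (x, h) ∈ G Bstar := by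
      rw [hG, mem_daStep pref prio acc qt]
      exact Or.inr ⟨hp, hx⟩
    rw [hfixG] at hmem
    exact (propose_spec hp).2 hmem
  have hOKF : fdaOK pref prio acc q region qreg tgt ord Astar := by
    rw [hAstarDef]
    exact fdaOK_iterate pref prio acc q region qreg tgt ord hinj hordR htq NN
  have hOKG : daOK pref prio acc qt Bstar := by
    rw [hBstarDef]
    exact daOK_iterate pref prio acc qt hinj NN
  -- every DA rejection is an FDA rejection
  have hI1 : ∀ t, G^[t] ∅ ⊆ Astar := by
    intro t
    induction t with
    | zero => intro p hp; exact absurd hp (notMem_empty _)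
    | succ t ih =>
      rw [Function.iterate_succ_apply']
      intro p hp
      rcases (mem_daStep pref prio acc qt).1 hp with hp' | hp'
      · exact ih hp'
      · obtain ⟨dd, hh⟩ := p
        obtain ⟨hprop, hkept⟩ := hp'
        dsimp only at hprop hkept
        by_contra hnot
        have hpA : propose pref Astar dd = some hh := propose_persist ih hprop hnot
        have hddK : dd ∈ fdaKept pref prio acc q region qreg tgt ord Astar hh :=
          hkeptF dd hh hpA
        have hddacc : dd ∈ acc hh := (mem_inter.1
          (fdaKept_subset_pool pref prio acc q region qreg tgt ord hordR hddK)).2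
        have hddpool : dd ∈ fdaPool pref acc (G^[t] ∅) hh :=
          mem_inter.2 ⟨mem_proposers.2 hprop, hddacc⟩
        have hT : qt hh ≤ ((fdaPool pref acc (G^[t] ∅) hh).filter
            (fun d' => prio hh d' < prio hh dd)).card := by
          by_contra hc
          push_neg at hc
          exact hkept (mem_topN.2 ⟨hddpool, hc⟩)
        by_cases hex : ∃ y ∈ (fdaPool pref acc (G^[t] ∅) hh).filter
            (fun d' => prio hh d' < prio hh dd), (y, hh) ∈ Astar
        · obtain ⟨y, hyT, hyA⟩ := hex
          rw [mem_filter] at hyT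
          have hyacc : y ∈ acc hh := (mem_inter.1 hyT.1).2
          have hbeats := (hOKF hh y hyacc hyA).1 dd hddK
          exact absurd hyT.2 (not_lt.2 hbeats.le)
        · push_neg at hex
          have hTsub : (fdaPool pref acc (G^[t] ∅) hh).filter
              (fun d' => prio hh d' < prio hh dd)
              ⊆ fdaKept pref prio acc q region qreg tgt ord Astar hh := by
            intro y hyT
            have hyprop : propose pref (G^[t] ∅) y = some hh :=
              mem_proposers.1 (mem_inter.1 (mem_filter.1 hyT).1).1
            exact hkeptF y hh (propose_persist ih hyprop (hex y hyT))
          have hddT : dd ∉ (fdaPool pref acc (G^[t] ∅) hh).filter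
              (fun d' => prio hh d' < prio hh dd) := by
            simp [mem_filter]
          have hins := insert_subset hddK hTsub
          have hcard := card_le_card hins
          rw [card_insert_of_notMem hddT] at hcard
          have hqe := hqt_eq hh
          omega
  -- every FDA rejection is a DA rejection
  have hstabF : ∀ t, F^[NN] (F^[t] ∅) = Astar := by
    intro t
    have h1 : F^[NN] (F^[t] ∅) = F^[NN + t] ∅ := (Function.iterate_add_apply F NN t ∅).symm
    have h2 : ∀ k, F^[NN + k] ∅ = Astar := by
      intro k
      induction k with
      | zero => rfl
      | succ k ih2 =>
        show F^[(NN + k) + 1] ∅ = Astar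
        rw [Function.iterate_succ_apply', ih2, hfixF]
    rw [h1, h2 t]
  have hI2 : ∀ t, F^[t] ∅ ⊆ Bstar := by
    intro t
    induction t with
    | zero => intro p hp; exact absurd hp (notMem_empty _)
    | succ t ih =>
      rw [Function.iterate_succ_apply']
      intro p hp
      rcases (mem_fdaStep pref prio acc q region qreg tgt ord).1 hp with hp' | hp'
      · exact ih hp'
      · obtain ⟨dd, hh⟩ := p
        obtain ⟨hprop, hkept⟩ := hp'
        dsimp only at hprop hkept
        by_contra hnot
        have hpB : propose pref Bstar dd = some hh := propose_persist ih hprop hnot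
        have hddKG : dd ∈ kept pref prio acc qt Bstar hh := hkeptG dd hh hpB
        have hddacc : dd ∈ acc hh :=
          (mem_inter.1 (kept_subset_pool pref prio acc qt hddKG)).2
        have hddpool : dd ∈ fdaPool pref acc (F^[t] ∅) hh :=
          mem_inter.2 ⟨mem_proposers.2 hprop, hddacc⟩
        have hprem := fdaPremise_of_rationed pref prio acc q region qreg tgt ord
          hinj hordR htq hddpool hkept
        have hchain := (fda_chain pref prio acc q region qreg tgt ord
          hinj hordR htq hprem NN).1
        rw [hstabF t] at hchain
        by_cases hex : ∃ y ∈ fdaKept pref prio acc q region qreg tgt ord (F^[t] ∅) hh,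
            (y, hh) ∈ Bstar
        · obtain ⟨y, hyK, hyB⟩ := hex
          have hyacc : y ∈ acc hh := (mem_inter.1
            (fdaKept_subset_pool pref prio acc q region qreg tgt ord hordR hyK)).2
          have hbeats := (hOKG hh y hyacc hyB).1 dd hddKG
          have hyb : prio hh y < prio hh dd := fdaKept_beats pref prio acc q region qreg
            tgt ord hinj hordR hddpool hkept hyK
          exact absurd hbeats (not_lt.2 hyb.le)
        · push_neg at hex
          have hKsub : fdaKept pref prio acc q region qreg tgt ord (F^[t] ∅) hh
              ⊆ kept pref prio acc qt Bstar hh := by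
            intro y hyK
            have hyprop : propose pref (F^[t] ∅) y = some hh :=
              mem_proposers.1 (mem_inter.1
                (fdaKept_subset_pool pref prio acc q region qreg tgt ord hordR hyK)).1
            exact hkeptG y hh (propose_persist ih hyprop (hex y hyK))
          have hins := insert_subset hddKG hKsub
          have hcard := card_le_card hins
          rw [card_insert_of_notMem hkept] at hcard
          have hkc := kept_card pref prio acc qt (g := hh) (B := Bstar) hinj
          have hqe := hqt_eq hh
          omega
  have hBA : Bstar = Astar := Subset.antisymm (hI1 NN) (hI2 NN)
  have h1 : daMatch pref prio acc qt d = propose pref Bstar d := rfl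
  rw [h1, hBA]
  rfl
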